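/- There exists a compact metrizable space K, a continuous (but not open) surjection φ: K → K, and w ∈ C(K) such that 1 lies in the approximate point spectrum of the operator (Tf)(k) = w(k)f(φ(k)) on C(K), yet no point k ∈ K satisfies both |wₙ(k)| ≥ 1 for all n and the condition that |wₙ(t)| ≤ 1 for all t ∈ φ^{-n}({k}) and all n. Concretely one may take K = {0} ∪ {1/n : n ∈ ℕ} ∪ [1,2], φ(0) = 0, φ(1/n) = 1/(n−1) for n ≥ 2, φ(1) fixing [1,2] pointwise, with w(x) = x on [1,2] and w ≡ 2 elsewhere. -/

import Mathlib

open Function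

/-- The compact set `{0} ∪ {1/n : n ≥ 1} ∪ [1,2]` of Example 2.7. -/
def S10 : Set ℝ := {0} ∪ {x : ℝ | ∃ n : ℕ, 1 ≤ n ∧ x = 1 / n} ∪ Set.Icc 1 2

namespace Ex27

noncomputable def phi0 (x : ℝ) : ℝ := x / max (1 - x) (min x 1)

lemma den_pos (x : ℝ) : 0 < max (1 - x) (min x 1) := by
  rcases le_total x (1/2) with h | h
  · exact lt_max_iff.2 (Or.inl (by linarith))
  · exact lt_max_iff.2 (Or.inr (lt_min_iff.2 ⟨by linarith, by norm_num⟩))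

lemma phi0_zero : phi0 0 = 0 := by simp [phi0]

lemma phi0_icc {x : ℝ} (hx : x ∈ Set.Icc (1:ℝ) 2) : phi0 x = x := by
  have h1 : min x 1 = 1 := min_eq_right hx.1
  have h2 : max (1 - x) (min x 1) = 1 := by rw [h1]; exact max_eq_right (by linarith [hx.1])
  simp [phi0, h2]

lemma phi0_frac {n : ℕ} (hn : 2 ≤ n) : phi0 (1 / n) = 1 / ((n:ℝ) - 1) := by
  have hn1 : (2:ℝ) ≤ n := by exact_mod_cast hn
  have hx : (1:ℝ)/n ≤ 1/2 := by
    rw [div_le_div_iff₀ (by linarith) (by norm_num)]; linarith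
  have hxpos : 0 < (1:ℝ)/n := by positivity
  have h1 : min ((1:ℝ)/n) 1 = 1/n := min_eq_left (by linarith)
  have h2 : max (1 - (1:ℝ)/n) (min ((1:ℝ)/n) 1) = 1 - 1/n := by
    rw [h1]; exact max_eq_left (by linarith)
  rw [phi0, h2]
  rw [div_eq_div_iff (by linarith) (by linarith)]
  field_simp

lemma zero_mem : (0:ℝ) ∈ S10 := Or.inl (Or.inl rfl)
lemma frac_mem {n : ℕ} (hn : 1 ≤ n) : (1:ℝ)/n ∈ S10 := Or.inl (Or.inr ⟨n, hn, rfl⟩)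
lemma icc_mem {x : ℝ} (hx : x ∈ Set.Icc (1:ℝ) 2) : x ∈ S10 := Or.inr hx

lemma cases {x : ℝ} (hx : x ∈ S10) :
    x = 0 ∨ (∃ n : ℕ, 2 ≤ n ∧ x = 1 / n) ∨ x ∈ Set.Icc (1:ℝ) 2 := by
  rcases hx with (h | ⟨n, hn, rfl⟩) | h
  · exact Or.inl h
  · rcases eq_or_lt_of_le hn with h1 | h1
    · right; right; rw [← h1]; norm_num
    · exact Or.inr (Or.inl ⟨n, h1, rfl⟩)
  · exact Or.inr (Or.inr h)

lemma le_half {x : ℝ} (hx : x ∈ S10) (hni : x ∉ Set.Icc (1:ℝ) 2) : x ≤ 1/2 := by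
  rcases cases hx with rfl | ⟨n, hn, rfl⟩ | h
  · norm_num
  · have hn1 : (2:ℝ) ≤ n := by exact_mod_cast hn
    exact one_div_le_one_div_of_le (by norm_num) hn1
  · exact absurd h hni

lemma phi0_mem {x : ℝ} (hx : x ∈ S10) : phi0 x ∈ S10 := by
  rcases cases hx with rfl | ⟨n, hn, rfl⟩ | h
  · rw [phi0_zero]; exact zero_mem
  · rw [phi0_frac hn, show ((n:ℝ) - 1) = ((n-1 : ℕ) : ℝ) by
      rw [Nat.cast_sub (by omega)]; norm_num]
    exact frac_mem (by omega)
  · rw [phi0_icc h]; exact icc_mem h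

lemma phi0_le_one {x : ℝ} (hx : x ∈ S10) (hni : x ∉ Set.Icc (1:ℝ) 2) : phi0 x ≤ 1 := by
  rcases cases hx with rfl | ⟨n, hn, rfl⟩ | h
  · rw [phi0_zero]; norm_num
  · rw [phi0_frac hn]
    have hn1 : (2:ℝ) ≤ n := by exact_mod_cast hn
    rw [div_le_one (by linarith)]; linarith
  · exact absurd h hni

noncomputable def w0 (x : ℝ) : ℝ := if x ≤ 3/4 then 2 else x

lemma w0_icc {x : ℝ} (hx : x ∈ Set.Icc (1:ℝ) 2) : w0 x = x :=
  if_neg (by push_neg; linarith [hx.1])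

lemma w0_not_icc {x : ℝ} (hx : x ∈ S10) (hni : x ∉ Set.Icc (1:ℝ) 2) : w0 x = 2 :=
  if_pos (by linarith [le_half hx hni])

lemma ne_34 {x : ℝ} (hx : x ∈ S10) : x ≠ 3/4 := by
  rcases cases hx with rfl | ⟨n, hn, rfl⟩ | h
  · norm_num
  · have hn1 : (2:ℝ) ≤ n := by exact_mod_cast hn
    have : (1:ℝ)/n ≤ 1/2 := one_div_le_one_div_of_le (by norm_num) hn1
    intro h; rw [h] at this; norm_num at this
  · intro he; rw [he] at h; have := h.1; norm_num at this

noncomputable def fr (n : ℕ) (x : ℝ) : ℝ :=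
  max 0 (1 - (2*((n:ℝ)+1)) * |x - (1 + 1/(2*((n:ℝ)+1)))|)

lemma fr_nonneg (n : ℕ) (x : ℝ) : 0 ≤ fr n x := le_max_left _ _

lemma fr_le_one (n : ℕ) (x : ℝ) : fr n x ≤ 1 := by
  apply max_le zero_le_one
  have h1 : (0:ℝ) ≤ (2*((n:ℝ)+1)) * |x - (1 + 1/(2*((n:ℝ)+1)))| := by positivity
  linarith

lemma fr_eq_zero {n : ℕ} {x : ℝ}
    (h : 1/(2*((n:ℝ)+1)) ≤ |x - (1 + 1/(2*((n:ℝ)+1)))|) : fr n x = 0 := by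
  apply max_eq_left
  have hp : (0:ℝ) < 2*((n:ℝ)+1) := by positivity
  have : (2*((n:ℝ)+1)) * (1/(2*((n:ℝ)+1))) ≤ (2*((n:ℝ)+1)) * |x - (1 + 1/(2*((n:ℝ)+1)))| :=
    mul_le_mul_of_nonneg_left h hp.le
  rw [mul_one_div_cancel hp.ne'] at this
  linarith

lemma fr_eq_zero_of_le_one {n : ℕ} {x : ℝ} (h : x ≤ 1) : fr n x = 0 := by
  apply fr_eq_zero
  have hd : (0:ℝ) < 1/(2*((n:ℝ)+1)) := by positivity
  calc 1/(2*((n:ℝ)+1)) ≤ (1 + 1/(2*((n:ℝ)+1))) - x := by linarith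
    _ ≤ |(1 + 1/(2*((n:ℝ)+1))) - x| := le_abs_self _
    _ = |x - (1 + 1/(2*((n:ℝ)+1)))| := abs_sub_comm _ _

lemma fr_peak (n : ℕ) : fr n (1 + 1/(2*((n:ℝ)+1))) = 1 := by simp [fr]


noncomputable def phi : S10 → S10 := fun x => ⟨phi0 x, phi0_mem x.2⟩
noncomputable def wc : S10 → ℂ := fun x => ((w0 x : ℝ) : ℂ)
noncomputable def fc : ℕ → S10 → ℂ := fun n x => ((fr n x : ℝ) : ℂ)

lemma continuous_phi : Continuous phi := by
  have h0 : Continuous phi0 := by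
    unfold phi0
    exact continuous_id.div (by continuity) (fun x => (den_pos x).ne')
  exact (h0.comp continuous_subtype_val).subtype_mk _

lemma continuous_wc : Continuous wc := by
  have h : Continuous fun x : S10 => w0 ↑x := by
    unfold w0
    exact Continuous.if_le continuous_const continuous_subtype_val
      continuous_subtype_val continuous_const
      (fun x hx => absurd hx (ne_34 x.2))
  exact Complex.continuous_ofReal.comp h

lemma surj_phi : Surjective phi := by
  intro y
  rcases cases y.2 with h0 | ⟨n, hn, hv⟩ | hicc
  · exact ⟨⟨0, zero_mem⟩, Subtype.ext (by simp [phi, phi0_zero, h0])⟩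
  · refine ⟨⟨1/((n+1:ℕ):ℝ), frac_mem (by omega)⟩, Subtype.ext ?_⟩
    show phi0 (1/((n+1:ℕ):ℝ)) = ↑y
    rw [phi0_frac (by omega : 2 ≤ n+1), hv]
    push_cast; ring_nf
  · exact ⟨y, Subtype.ext (phi0_icc hicc)⟩

lemma compact_S10 : IsCompact S10 := by
  have heq : S10 = insert (0:ℝ) (Set.range fun n : ℕ => 1/((n:ℝ)+1)) ∪ Set.Icc 1 2 := by
    ext x
    constructor
    · intro hx
      rcases hx with (h | ⟨n, hn, rfl⟩) | h
      · exact Or.inl (Or.inl h)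
      · refine Or.inl (Or.inr ⟨n-1, ?_⟩)
        have : ((n-1:ℕ):ℝ) + 1 = n := by
          rw [Nat.cast_sub (by omega)]; ring
        simp [this]
      · exact Or.inr h
    · intro hx
      rcases hx with (h | ⟨n, rfl⟩) | h
      · exact Or.inl (Or.inl h)
      · refine Or.inl (Or.inr ⟨n+1, by omega, by push_cast; ring⟩)
      · exact Or.inr h
  rw [heq]
  exact (tendsto_one_div_add_atTop_nhds_zero_nat.isCompact_insert_range).union isCompact_Icc

lemma not_open_phi : ¬ IsOpenMap phi := by
  intro hopen
  have hhalf : (1/2 : ℝ) ∈ S10 := by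
    have := frac_mem (n := 2) (by omega); norm_num at this ⊢; exact this
  set a : S10 := ⟨1/2, hhalf⟩ with ha
  set b : S10 := ⟨1, icc_mem (by norm_num)⟩ with hb
  have hab : phi a = b := by
    apply Subtype.ext
    show phi0 (1/2) = 1
    have := phi0_frac (n := 2) le_rfl
    norm_num at this ⊢; exact this
  set U : Set S10 := {x : S10 | (x:ℝ) = 1/2} with hU
  have hUopen : IsOpen U := by
    have : U = Subtype.val ⁻¹' Metric.ball (1/2 : ℝ) (1/8) := by
      ext x
      simp only [hU, Set.mem_setOf_eq, Set.mem_preimage, Metric.mem_ball, Real.dist_eq]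
      constructor
      · intro h; rw [h]; norm_num
      · intro h
        rcases cases x.2 with h0 | ⟨n, hn, hv⟩ | hicc
        · rw [h0, abs_lt] at h; norm_num at h
        · rw [hv] at h ⊢
          have hn1 : (2:ℝ) ≤ n := by exact_mod_cast hn
          have h2 : (n:ℝ) ≤ 2 := by
            by_contra hc
            push_neg at hc
            have h3 : (3:ℝ) ≤ n := by exact_mod_cast (by exact_mod_cast hc : 2 < n)
            have : (1:ℝ)/n ≤ 1/3 := one_div_le_one_div_of_le (by norm_num) h3
            rw [abs_lt] at h; linarith [h.1]
          have : (n:ℝ) = 2 := le_antisymm h2 hn1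
          rw [this]
        · rw [abs_lt] at h; have := hicc.1; linarith [h.2]
    rw [this]
    exact Metric.isOpen_ball.preimage continuous_subtype_val
  have hbmem : b ∈ phi '' U := ⟨a, rfl, hab⟩
  obtain ⟨ε, hε, hball⟩ := Metric.isOpen_iff.1 (hopen U hUopen) b hbmem
  set y : S10 := ⟨min (1 + ε/2) 2, icc_mem ⟨le_min (by linarith) (by norm_num), min_le_right _ _⟩⟩ with hy
  have hyb : y ∈ Metric.ball b ε := by
    rw [Metric.mem_ball, Subtype.dist_eq, Real.dist_eq]
    show |min (1 + ε/2) 2 - 1| < ε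
    have h1 : (1:ℝ) ≤ min (1 + ε/2) 2 := le_min (by linarith) (by norm_num)
    have h2 : min (1 + ε/2) 2 ≤ 1 + ε/2 := min_le_left _ _
    rw [abs_of_nonneg (by linarith)]; linarith
  obtain ⟨x, hxU, hxy⟩ := hball hyb
  have hxa : x = a := Subtype.ext hxU
  rw [hxa, hab] at hxy
  have : (1:ℝ) = min (1 + ε/2) 2 := congrArg Subtype.val hxy
  have h1 : (1:ℝ) < min (1 + ε/2) 2 := lt_min (by linarith) (by norm_num)
  linarith [this ▸ h1]

lemma continuous_fc (n : ℕ) : Continuous (fc n) := by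
  have h : Continuous fun x : S10 => fr n ↑x := by
    unfold fr
    exact continuous_const.max
      (continuous_const.sub (continuous_const.mul
        ((continuous_subtype_val.sub continuous_const).abs)))
  exact Complex.continuous_ofReal.comp h

lemma abs_fc_le (n : ℕ) (x : S10) : ‖fc n x‖ ≤ 1 := by
  show ‖((fr n ↑x : ℝ) : ℂ)‖ ≤ 1
  rw [Complex.norm_real, Real.norm_eq_abs, abs_of_nonneg (fr_nonneg n ↑x)]
  exact fr_le_one n ↑x

lemma peak_mem (n : ℕ) : (1 + 1/(2*((n:ℝ)+1))) ∈ S10 := by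
  apply icc_mem
  constructor
  · have : (0:ℝ) < 1/(2*((n:ℝ)+1)) := by positivity
    linarith
  · have h1 : (2:ℝ) ≤ 2*((n:ℝ)+1) := by
      have : (0:ℝ) ≤ n := Nat.cast_nonneg n
      linarith
    have : (1:ℝ)/(2*((n:ℝ)+1)) ≤ 1/2 := one_div_le_one_div_of_le (by norm_num) h1
    linarith

lemma abs_fc_peak (n : ℕ) : ‖fc n ⟨_, peak_mem n⟩‖ = 1 := by
  show ‖((fr n (1 + 1/(2*((n:ℝ)+1))) : ℝ) : ℂ)‖ = 1
  rw [fr_peak]; norm_num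

lemma phi_icc {x : S10} (hx : (x:ℝ) ∈ Set.Icc (1:ℝ) 2) : phi x = x :=
  Subtype.ext (phi0_icc hx)

lemma key_estimate {ε : ℝ} (hε : 0 < ε) {n : ℕ} (hn : 1/((n:ℝ)+1) ≤ ε) (x : S10) :
    ‖wc x * fc n (phi x) - fc n x‖ ≤ ε := by
  have hcast : wc x * fc n (phi x) - fc n x
      = (((w0 ↑x * fr n ↑(phi x) - fr n ↑x : ℝ)) : ℂ) := by
    unfold wc fc; push_cast; ring
  rw [hcast, Complex.norm_real, Real.norm_eq_abs]
  by_cases hx : (x:ℝ) ∈ Set.Icc (1:ℝ) 2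
  · rw [phi_icc hx, w0_icc hx]
    have hx1 := hx.1
    rw [show (x:ℝ) * fr n ↑x - fr n ↑x = ((x:ℝ) - 1) * fr n ↑x by ring,
      abs_of_nonneg (mul_nonneg (by linarith) (fr_nonneg n ↑x))]
    by_cases hfar : 1/(2*((n:ℝ)+1)) ≤ |(x:ℝ) - (1 + 1/(2*((n:ℝ)+1)))|
    · rw [fr_eq_zero hfar, mul_zero]; linarith
    · push_neg at hfar
      have h2 : (x:ℝ) - (1 + 1/(2*((n:ℝ)+1))) < 1/(2*((n:ℝ)+1)) := (abs_lt.1 hfar).2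
      have hdd : 1/(2*((n:ℝ)+1)) + 1/(2*((n:ℝ)+1)) = 1/((n:ℝ)+1) := by
        rw [← add_div]
        rw [div_eq_div_iff (by positivity) (by positivity)]
        ring
      have hx2 : (x:ℝ) - 1 ≤ 1/((n:ℝ)+1) := by linarith
      calc ((x:ℝ) - 1) * fr n ↑x ≤ ((x:ℝ) - 1) * 1 :=
            mul_le_mul_of_nonneg_left (fr_le_one n ↑x) (by linarith)
        _ = (x:ℝ) - 1 := mul_one _
        _ ≤ ε := le_trans hx2 hn
  · have hh := le_half x.2 hx
    rw [fr_eq_zero_of_le_one (show (x:ℝ) ≤ 1 by linarith),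
      fr_eq_zero_of_le_one (show (↑(phi x):ℝ) ≤ 1 from phi0_le_one x.2 hx)]
    simp; linarith

lemma exists_preimage_big (k : S10) : ∃ t : S10, phi t = k ∧ 1 < w0 ↑t := by
  rcases cases k.2 with h0 | ⟨m, hm, hv⟩ | hicc
  · refine ⟨⟨0, zero_mem⟩, Subtype.ext ?_, ?_⟩
    · show phi0 0 = ↑k; rw [phi0_zero, h0]
    · show 1 < w0 0; rw [w0, if_pos (by norm_num)]; norm_num
  · refine ⟨⟨1/((m+1:ℕ):ℝ), frac_mem (by omega)⟩, Subtype.ext ?_, ?_⟩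
    · show phi0 (1/((m+1:ℕ):ℝ)) = ↑k
      rw [phi0_frac (by omega : 2 ≤ m+1), hv]
      push_cast; ring_nf
    · show 1 < w0 (1/((m+1:ℕ):ℝ))
      have hm1 : (2:ℝ) ≤ (m+1:ℕ) := by exact_mod_cast (by omega : 2 ≤ m+1)
      have : (1:ℝ)/((m+1:ℕ):ℝ) ≤ 1/2 := one_div_le_one_div_of_le (by norm_num) hm1
      rw [w0, if_pos (by linarith)]; norm_num
  · rcases eq_or_lt_of_le hicc.1 with h1 | h1
    · have hhalf : (1/2 : ℝ) ∈ S10 := by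
        have := frac_mem (n := 2) (by omega); norm_num at this ⊢; exact this
      refine ⟨⟨1/2, hhalf⟩, Subtype.ext ?_, ?_⟩
      · show phi0 (1/2) = ↑k
        have := phi0_frac (n := 2) le_rfl
        norm_num at this; rw [this, ← h1]
      · show 1 < w0 (1/2); rw [w0, if_pos (by norm_num)]; norm_num
    · refine ⟨k, phi_icc hicc, ?_⟩
      rw [w0_icc hicc]; exact h1

lemma no_good_point :
    ¬ ∃ k : S10,
      (∀ n : ℕ, 1 ≤ ‖∏ i ∈ Finset.range n, wc (phi^[i] k)‖) ∧
      (∀ n : ℕ, ∀ t : S10, phi^[n] t = k →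
        ‖∏ i ∈ Finset.range n, wc (phi^[i] t)‖ ≤ 1) := by
  rintro ⟨k, -, hk2⟩
  obtain ⟨t, ht, hw⟩ := exists_preimage_big k
  have h1 := hk2 1 t (by simpa using ht)
  rw [Finset.prod_range_one] at h1
  simp only [iterate_zero, id_eq] at h1
  rw [show wc t = ((w0 ↑t : ℝ) : ℂ) from rfl, Complex.norm_real, Real.norm_eq_abs,
    abs_of_nonneg (by linarith)] at h1
  linarith

end Ex27


theorem openness_cannot_be_dropped :
    IsCompact S10 ∧
    ∃ (φ : S10 → S10) (w : S10 → ℂ),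
      Continuous φ ∧ Surjective φ ∧ ¬ IsOpenMap φ ∧ Continuous w ∧
      (∀ x : S10, (x : ℝ) = 0 → (φ x : ℝ) = 0) ∧
      (∀ x : S10, ∀ n : ℕ, 2 ≤ n → (x : ℝ) = 1 / n → (φ x : ℝ) = 1 / ((n : ℝ) - 1)) ∧
      (∀ x : S10, (x : ℝ) ∈ Set.Icc (1 : ℝ) 2 → φ x = x) ∧
      (∀ x : S10, (x : ℝ) ∈ Set.Icc (1 : ℝ) 2 → w x = ((x : ℝ) : ℂ)) ∧
      (∀ x : S10, (x : ℝ) ∉ Set.Icc (1 : ℝ) 2 → w x = 2) ∧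
      -- `1` lies in the approximate point spectrum of `T f = w · (f ∘ φ)`
      (∃ f : ℕ → S10 → ℂ,
        (∀ n, Continuous (f n) ∧ (∀ x, ‖f n x‖ ≤ 1) ∧
          ∃ x, ‖f n x‖ = 1) ∧
        (∀ ε : ℝ, 0 < ε → ∃ N : ℕ, ∀ n, N ≤ n →
          ∀ x, ‖w x * f n (φ x) - f n x‖ ≤ ε)) ∧
      -- yet no point satisfies the two cocycle conditions of Lemma 2.6
      ¬ ∃ k : S10,
        (∀ n : ℕ, 1 ≤ ‖∏ i ∈ Finset.range n, w (φ^[i] k)‖) ∧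
        (∀ n : ℕ, ∀ t : S10, φ^[n] t = k →
          ‖∏ i ∈ Finset.range n, w (φ^[i] t)‖ ≤ 1) := by

  refine ⟨Ex27.compact_S10, Ex27.phi, Ex27.wc, Ex27.continuous_phi, Ex27.surj_phi,
    Ex27.not_open_phi, Ex27.continuous_wc, ?_, ?_, ?_, ?_, ?_, ⟨Ex27.fc, ?_, ?_⟩,
    Ex27.no_good_point⟩
  · intro x hx
    show Ex27.phi0 ↑x = 0
    rw [hx, Ex27.phi0_zero]
  · intro x n hn hx
    show Ex27.phi0 ↑x = 1 / ((n:ℝ) - 1)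
    rw [hx, Ex27.phi0_frac hn]
  · intro x hx
    exact Ex27.phi_icc hx
  · intro x hx
    show ((Ex27.w0 ↑x : ℝ) : ℂ) = ((x:ℝ) : ℂ)
    rw [Ex27.w0_icc hx]
  · intro x hx
    show ((Ex27.w0 ↑x : ℝ) : ℂ) = 2
    rw [Ex27.w0_not_icc x.2 hx]; norm_num
  · intro n
    exact ⟨Ex27.continuous_fc n, Ex27.abs_fc_le n, ⟨_, Ex27.abs_fc_peak n⟩⟩
  · intro ε hε
    obtain ⟨N, hN⟩ := exists_nat_ge (1/ε)
    refine ⟨N, fun n hn x => ?_⟩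
    apply Ex27.key_estimate hε _ x
    have h1 : (1:ℝ)/ε ≤ (n:ℝ) := le_trans hN (by exact_mod_cast hn)
    rw [div_le_iff₀ (by positivity)]
    rw [div_le_iff₀ hε] at h1
    nlinarith
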